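/- arXiv:1911.03194 — 5 statements merged into one kernel-verified Lean document; each statement's English description precedes it below -/
import Mathlib

section
/- Let V be an n-dimensional vector space over a field F, let Λ = (λ_{i,j}) be an n×n matrix with all entries nonzero, and fix a basis 𝒱 of V. Suppose φ : V → V is a map such that for every pair v, w ∈ V there exists a linear endomorphism φ_{v,w} of V whose matrix with respect to 𝒱 has the form (λ_{i,j} a_{i,j}) for some symmetric matrix (a_{i,j}), and which satisfies φ(v) = φ_{v,w}(v) and φ(w) = φ_{v,w}(w). Then φ is linear. -/
/-- A 2-local linear map on a finite dimensional vector space, each of whose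
local implementations is Λ-symmetric with respect to a fixed basis (Λ having nonzero
entries), is linear. -/
theorem two_local_linear_map_is_linear
    {F V : Type*} [Field F] [AddCommGroup V] [Module F V] {n : ℕ}
    (b : Module.Basis (Fin n) F V)
    (Λ : Matrix (Fin n) (Fin n) F) (hΛ : ∀ i j, Λ i j ≠ 0)
    (φ : V → V)
    (h : ∀ v w : V, ∃ T : V →ₗ[F] V,
      (∃ A : Matrix (Fin n) (Fin n) F, A.IsSymm ∧
        LinearMap.toMatrix b b T = Matrix.of fun i j => Λ i j * A i j) ∧
      T v = φ v ∧ T w = φ w) :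
    IsLinearMap F φ := by
  have key : ∀ (x : V) (i : Fin n), b.repr (φ x) i =
      ∑ j, (Λ i j / Λ j i) * (b.repr (φ (b i)) j) * (b.repr x j) := by
    intro x i
    obtain ⟨T, ⟨A, hA, hM⟩, hx, hi⟩ := h x (b i)
    have hrep : ∀ j, b.repr (φ (b i)) j = Λ j i * A j i := by
      intro j
      rw [← hi, ← LinearMap.toMatrix_apply b b T j i, hM]
      rfl
    have hmv : b.repr (T x) = (LinearMap.toMatrix b b T).mulVec (b.repr x) :=
      (LinearMap.toMatrix_mulVec_repr b b T x).symm
    rw [← hx]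
    have : b.repr (T x) i = ∑ j, Λ i j * A i j * b.repr x j := by
      rw [hmv, hM]
      simp [Matrix.mulVec, dotProduct]
    rw [this]
    refine Finset.sum_congr rfl fun j _ => ?_
    rw [hrep j, hA.apply j i]
    have hc : Λ i j / Λ j i * (Λ j i * A j i) = Λ i j * A j i := by
      field_simp [hΛ j i]
    rw [hc]
  constructor
  · intro x y
    apply b.repr.injective
    ext i
    rw [map_add, Finsupp.add_apply, key x i, key y i, key (x + y) i, ← Finset.sum_add_distrib]
    refine Finset.sum_congr rfl fun j _ => ?_
    rw [map_add, Finsupp.add_apply]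
    ring
  · intro c x
    apply b.repr.injective
    ext i
    rw [map_smul, Finsupp.smul_apply, key x i, key (c • x) i, smul_eq_mul, Finset.mul_sum]
    refine Finset.sum_congr rfl fun j _ => ?_
    rw [map_smul, Finsupp.smul_apply, smul_eq_mul]
    ring
end

section
/- Let A be a finite dimensional formally real Jordan algebra over ℝ, with associative positive definite symmetric bilinear form B and all derivations inner. Suppose Δ : A → A is a map such that for every x, y ∈ A there exists a derivation D_{x,y} of A with Δ(x) = D_{x,y}(x) and Δ(y) = D_{x,y}(y) (a 2-local derivation). Then Δ is linear, and hence a derivation. -/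
open Finset

/-- Every 2-local derivation on a finite dimensional formally real Jordan
algebra over ℝ (with associative positive definite symmetric bilinear form, all derivations
inner) is linear, hence a derivation. -/
theorem two_local_derivation_is_derivation
    {A : Type*} [NonUnitalNonAssocCommRing A] [IsCommJordan A]
    [Module ℝ A] [IsScalarTower ℝ A A] [SMulCommClass ℝ A A] [FiniteDimensional ℝ A]
    (hFR : ∀ (k : ℕ) (a : Fin k → A), ∑ i, a i * a i = 0 → ∀ i, a i = 0)
    (B : LinearMap.BilinForm ℝ A)
    (hsymm : ∀ x y : A, B x y = B y x)
    (hpos : ∀ x : A, x ≠ 0 → 0 < B x x)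
    (hassoc : ∀ x y z : A, B (x * y) z = B x (y * z))
    (hInner : ∀ D : A →ₗ[ℝ] A, (∀ x y : A, D (x * y) = D x * y + x * D y) →
      ∃ (k : ℕ) (a b : Fin k → A),
        ∀ x : A, D x = ∑ i, (a i * (b i * x) - b i * (a i * x)))
    (Δ : A → A)
    (h2loc : ∀ x y : A, ∃ D : A →ₗ[ℝ] A,
      (∀ u v : A, D (u * v) = D u * v + u * D v) ∧ D x = Δ x ∧ D y = Δ y) :
    IsLinearMap ℝ Δ ∧ ∀ x y : A, Δ (x * y) = Δ x * y + x * Δ y := by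
  -- every derivation is B-skew-symmetric
  have skew : ∀ D : A →ₗ[ℝ] A, (∀ u v : A, D (u * v) = D u * v + u * D v) →
      ∀ x y : A, B (D x) y = -(B x (D y)) := by
    intro D hD x y
    obtain ⟨k, a, b, hab⟩ := hInner D hD
    rw [hab x, hab y, map_sum, LinearMap.sum_apply, map_sum, ← Finset.sum_neg_distrib]
    refine Finset.sum_congr rfl fun i _ => ?_
    have h1 : B (a i * (b i * x)) y = B x (b i * (a i * y)) := by
      rw [mul_comm (a i) (b i * x), hassoc, mul_comm (b i) x, hassoc]
    have h2 : B (b i * (a i * x)) y = B x (a i * (b i * y)) := by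
      rw [mul_comm (b i) (a i * x), hassoc, mul_comm (a i) x, hassoc]
    rw [map_sub, LinearMap.sub_apply, map_sub, h1, h2]
    ring
  have key : ∀ u v : A, B (Δ u) v = -(B u (Δ v)) := by
    intro u v
    obtain ⟨D, hD, hu, hv⟩ := h2loc u v
    rw [← hu, ← hv]; exact skew D hD u v
  have nondeg : ∀ w : A, (∀ z : A, B w z = 0) → w = 0 := by
    intro w h
    by_contra hw
    exact absurd (h w) (hpos w hw).ne'
  have hadd : ∀ x y : A, Δ (x + y) = Δ x + Δ y := by
    intro x y
    have : ∀ z : A, B (Δ (x + y) - (Δ x + Δ y)) z = 0 := by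
      intro z
      have k1 := key (x + y) z
      have k2 := key x z
      have k3 := key y z
      simp only [map_add, LinearMap.add_apply, map_sub, LinearMap.sub_apply] at *
      linarith
    have := nondeg _ this
    rwa [sub_eq_zero] at this
  have hsmul : ∀ (c : ℝ) (x : A), Δ (c • x) = c • Δ x := by
    intro c x
    obtain ⟨D, hD, hx, hcx⟩ := h2loc x (c • x)
    rw [← hcx, map_smul, hx]
  have hsq : ∀ x : A, Δ (x * x) = Δ x * x + x * Δ x := by
    intro x
    have : ∀ z : A, B (Δ (x * x) - (Δ x * x + x * Δ x)) z = 0 := by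
      intro z
      obtain ⟨D, hD, hx, hz⟩ := h2loc x z
      have k1 := key (x * x) z
      have k2 := skew D hD (x * x) z
      rw [hD, hx, hz] at k2
      simp only [map_add, LinearMap.add_apply, map_sub, LinearMap.sub_apply] at *
      linarith
    have := nondeg _ this
    rwa [sub_eq_zero] at this
  have hmul : ∀ x y : A, Δ (x * y) = Δ x * y + x * Δ y := by
    intro x y
    have h1 := hsq (x + y)
    have e2 : (x + y) * (x + y) = x * x + (x * y + (x * y + y * y)) := by
      rw [add_mul, mul_add, mul_add, mul_comm y x]; abel
    rw [e2, hadd, hadd, hadd, hsq, hsq, hadd] at h1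
    have h2 : Δ x * x + x * Δ x + (Δ y * y + y * Δ y) + (Δ (x * y) + Δ (x * y))
        = Δ x * x + x * Δ x + (Δ y * y + y * Δ y)
          + ((Δ x * y + x * Δ y) + (Δ x * y + x * Δ y)) := by
      calc Δ x * x + x * Δ x + (Δ y * y + y * Δ y) + (Δ (x * y) + Δ (x * y))
          = Δ x * x + x * Δ x + (Δ (x * y) + (Δ (x * y) + (Δ y * y + y * Δ y))) := by abel
        _ = (Δ x + Δ y) * (x + y) + (x + y) * (Δ x + Δ y) := h1
        _ = Δ x * x + x * Δ x + (Δ y * y + y * Δ y)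
            + ((Δ x * y + x * Δ y) + (Δ x * y + x * Δ y)) := by
            simp only [add_mul, mul_add]
            rw [mul_comm (Δ y) x, mul_comm y (Δ x)]
            abel
    have h3 := add_left_cancel h2
    have h4 : (2 : ℝ) • Δ (x * y) = (2 : ℝ) • (Δ x * y + x * Δ y) := by
      rw [two_smul, two_smul]; exact h3
    have h5 := congrArg (fun t => (2 : ℝ)⁻¹ • t) h4
    simpa [smul_smul] using h5
  exact ⟨⟨hadd, hsmul⟩, hmul⟩
end

section
/- Let A be a finite dimensional formally real Jordan algebra over ℝ with unit, associative positive definite symmetric bilinear form B. Suppose Δ : A → A is a map such that for every x, y ∈ A there exists a symmetry s ∈ A (s² = 1) with Δ(x) = U_s(x) and Δ(y) = U_s(y), where U_s(z) = 2s(sz) − z (a 2-local 1-automorphism). Then Δ is linear, and hence an algebra automorphism of A. -/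
open Finset


section
variable {A : Type*} [NonAssocRing A] [Module ℝ A]

theorem zsmul_cancel {n : ℤ} (hn : (n:ℝ) ≠ 0) {a b : A} (h : n • a = n • b) :
    a = b := by
  have h2 : (n:ℝ) • a = (n:ℝ) • b := by
    rw [Int.cast_smul_eq_zsmul, Int.cast_smul_eq_zsmul]; exact h
  calc a = (n:ℝ)⁻¹ • ((n:ℝ) • a) := (inv_smul_smul₀ hn a).symm
    _ = (n:ℝ)⁻¹ • ((n:ℝ) • b) := by rw [h2]
    _ = b := inv_smul_smul₀ hn b

theorem key1 (hcomm : ∀ x y : A, x * y = y * x)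
    (hJordan : ∀ a b : A, ((a * a) * b) * a = (a * a) * (b * a))
    (s : A) (hs : s * s = 1) (x y : A) :
    s * ((s * x) * y) = (s * x) * (s * y) := by
  have cs : ∀ a : A, a * s = s * a := fun a => hcomm a s
  have e3 := hJordan x y
  have e5 : (((s+x)*(s+x))*y)*(s+x) - (((s-x)*(s-x))*y)*(s-x)
      = ((s+x)*(s+x))*(y*(s+x)) - ((s-x)*(s-x))*(y*(s-x)) := by
    rw [hJordan, hJordan]
  simp only [mul_add, add_mul, mul_sub, sub_mul, cs, hs, one_mul, mul_one] at e5
  rw [e3] at e5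
  have e6 := sub_eq_zero_of_eq e5
  have e7 : (4:ℤ) • (s * (s * x * y)) = (4:ℤ) • (s * x * (s * y)) := by
    abel_nf at e6 ⊢
    rw [← sub_eq_zero]
    abel_nf
    convert e6 using 2
  exact zsmul_cancel (by norm_num) e7

theorem keyA (hcomm : ∀ x y : A, x * y = y * x)
    (hJordan : ∀ a b : A, ((a * a) * b) * a = (a * a) * (b * a))
    (s : A) (hs : s * s = 1) (x : A) :
    s * (s * (x * x)) + 2 • ((s * (s * x)) * x)
      = x * x + 2 • ((s * x) * (s * x)) := by
  have cs : ∀ a : A, a * s = s * a := fun a => hcomm a s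
  have e3 := hJordan x s
  simp only [cs] at e3
  have e5 : (((s+x)*(s+x))*s)*(s+x) + (((s-x)*(s-x))*s)*(s-x)
      = ((s+x)*(s+x))*(s*(s+x)) + ((s-x)*(s-x))*(s*(s-x)) := by
    rw [hJordan, hJordan]
  simp only [mul_add, add_mul, mul_sub, sub_mul, cs, hs, one_mul, mul_one] at e5
  rw [e3] at e5
  have e6 := sub_eq_zero_of_eq e5
  have e7 : (2:ℤ) • (s * (s * (x * x)) + 2 • ((s * (s * x)) * x))
      = (2:ℤ) • (x * x + 2 • ((s * x) * (s * x))) := by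
    abel_nf at e6 ⊢
    rw [← sub_eq_zero]
    abel_nf
    convert e6 using 2
  exact zsmul_cancel (by norm_num) e7

end

section
variable {A : Type*} [NonAssocRing A] [Module ℝ A]

theorem keyL3 (hcomm : ∀ x y : A, x * y = y * x)
    (hJordan : ∀ a b : A, ((a * a) * b) * a = (a * a) * (b * a))
    (s : A) (hs : s * s = 1) (x : A) :
    s * (s * (s * x)) = s * x := by
  have h := key1 hcomm hJordan s hs x s
  rw [hs, mul_one, hcomm (s*x) s] at h
  exact h

theorem keyVsq (hcomm : ∀ x y : A, x * y = y * x)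
    (hJordan : ∀ a b : A, ((a * a) * b) * a = (a * a) * (b * a))
    (s : A) (hs : s * s = 1) (x : A) :
    (s * (s * x)) * (s * (s * x)) = (s * x) * (s * x) := by
  set v := s * x with hv
  -- (s*v)*v = s*(v*v)
  have h2 : (s * v) * v = s * (v * v) := by
    have := key1 hcomm hJordan s hs x v
    rw [← hv] at this
    rw [hcomm (s*v) v, ← this]
  -- (s*v)*(s*v) = s*(s*(v*v))
  have h1 : (s * v) * (s * v) = s * (s * (v * v)) := by
    have := key1 hcomm hJordan s hs v v
    rw [← this, h2]
  have hA := keyA hcomm hJordan s hs v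
  have hv3 : s * (s * v) = v := keyL3 hcomm hJordan s hs x
  rw [hv3, ← h1] at hA
  -- hA : (s*v)*(s*v) + 2•(v*v) = v*v + 2•((s*v)*(s*v))
  rw [← sub_eq_zero] at hA
  abel_nf at hA
  simp only [neg_smul, one_smul] at hA
  exact neg_add_eq_zero.mp hA

theorem keyUmul (hcomm : ∀ x y : A, x * y = y * x)
    (hJordan : ∀ a b : A, ((a * a) * b) * a = (a * a) * (b * a))
    (s : A) (hs : s * s = 1) (x : A) :
    2 • (s * (s * (x * x))) - x * x
      = (2 • (s * (s * x)) - x) * (2 • (s * (s * x)) - x) := by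
  have hA := keyA hcomm hJordan s hs x
  have hv := keyVsq hcomm hJordan s hs x
  have cw : x * (s * (s * x)) = (s * (s * x)) * x := hcomm _ _
  rw [← sub_eq_zero]
  have expand : 2 • (s * (s * (x * x))) - x * x
      - (2 • (s * (s * x)) - x) * (2 • (s * (s * x)) - x)
      = 2 • (s * (s * (x * x)) + 2 • ((s * (s * x)) * x)
            - (x * x + 2 • ((s * x) * (s * x))))
        + 4 • ((s * x) * (s * x) - (s * (s * x)) * (s * (s * x))) := by
    simp only [two_smul, sub_mul, mul_sub, add_mul, mul_add, cw]
    abel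
  rw [expand, hA, hv]
  simp

end

section
variable {A : Type*} [NonAssocRing A] [Module ℝ A]

theorem keyUsq (hcomm : ∀ x y : A, x * y = y * x)
    (hJordan : ∀ a b : A, ((a * a) * b) * a = (a * a) * (b * a))
    (s : A) (hs : s * s = 1) (x : A) :
    2 • (s * (s * (2 • (s * (s * x)) - x))) - (2 • (s * (s * x)) - x) = x := by
  have L3 : ∀ z : A, s * (s * (s * z)) = s * z := keyL3 hcomm hJordan s hs
  have : s * (s * (2 • (s * (s * x)) - x)) = s * (s * x) := by
    simp only [two_smul, mul_sub, mul_add]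
    rw [show s * (s * (s * (s * x))) = s * (s * x) from by
      have := L3 (s * x); rw [this]]
    abel
  rw [this]; abel

theorem keySelfAdj (hcomm : ∀ x y : A, x * y = y * x)
    (B : LinearMap.BilinForm ℝ A)
    (hassoc : ∀ x y z : A, B (x * y) z = B x (y * z))
    (s x z : A) :
    B (2 • (s * (s * x)) - x) z = B x (2 • (s * (s * z)) - z) := by
  have h1 : B (s * (s * x)) z = B x (s * (s * z)) := by
    rw [hcomm s (s*x), hassoc (s*x) s z, hcomm s x, hassoc x s (s*z)]
  simp only [map_sub, LinearMap.sub_apply, map_nsmul, LinearMap.smul_apply,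
    map_smul]
  rw [h1]

theorem keyBpres (hcomm : ∀ x y : A, x * y = y * x)
    (hJordan : ∀ a b : A, ((a * a) * b) * a = (a * a) * (b * a))
    (B : LinearMap.BilinForm ℝ A)
    (hassoc : ∀ x y z : A, B (x * y) z = B x (y * z))
    (s : A) (hs : s * s = 1) (x y : A) :
    B (2 • (s * (s * x)) - x) (2 • (s * (s * y)) - y) = B x y := by
  rw [keySelfAdj hcomm B hassoc, keyUsq hcomm hJordan s hs]

end


/-- Every 2-local 1-automorphism (implemented at each pair by U_s = 2L(s)² − id
for a symmetry s) of a finite dimensional formally real unital Jordan algebra over ℝ with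
associative positive definite symmetric bilinear form is linear, hence an automorphism. -/
theorem two_local_one_automorphism_is_automorphism
    {A : Type*} [NonAssocRing A]
    [Module ℝ A] [IsScalarTower ℝ A A] [SMulCommClass ℝ A A] [FiniteDimensional ℝ A]
    (hcomm : ∀ x y : A, x * y = y * x)
    (hJordan : ∀ a b : A, ((a * a) * b) * a = (a * a) * (b * a))
    (hFR : ∀ (k : ℕ) (a : Fin k → A), ∑ i, a i * a i = 0 → ∀ i, a i = 0)
    (B : LinearMap.BilinForm ℝ A)
    (hsymm : ∀ x y : A, B x y = B y x)
    (hpos : ∀ x : A, x ≠ 0 → 0 < B x x)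
    (hassoc : ∀ x y z : A, B (x * y) z = B x (y * z))
    (Δ : A → A)
    (h2loc : ∀ x y : A, ∃ s : A, s * s = 1 ∧
      Δ x = 2 • (s * (s * x)) - x ∧ Δ y = 2 • (s * (s * y)) - y) :
    IsLinearMap ℝ Δ ∧ ∀ x y : A, Δ (x * y) = Δ x * Δ y := by
  have Binner : ∀ x y : A, B (Δ x) (Δ y) = B x y := by
    intro x y
    obtain ⟨s, hs, h1, h2⟩ := h2loc x y
    rw [h1, h2, keyBpres hcomm hJordan B hassoc s hs]
  have hzero : ∀ w : A, B w w = 0 → w = 0 := by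
    intro w h
    by_contra hw
    exact (hpos w hw).ne' h
  have hadd : ∀ x y : A, Δ (x + y) = Δ x + Δ y := by
    intro x y
    rw [← sub_eq_zero]
    apply hzero
    simp only [map_sub, map_add, LinearMap.sub_apply, LinearMap.add_apply, Binner]
    ring
  have hsmul : ∀ (c : ℝ) (x : A), Δ (c • x) = c • Δ x := by
    intro c x
    rw [← sub_eq_zero]
    apply hzero
    simp only [map_sub, map_smul, LinearMap.sub_apply, LinearMap.smul_apply,
      Binner, smul_eq_mul]
    ring
  refine ⟨⟨hadd, hsmul⟩, ?_⟩
  have hsq : ∀ x : A, Δ (x * x) = Δ x * Δ x := by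
    intro x
    obtain ⟨s, hs, h1, h2⟩ := h2loc x (x * x)
    rw [h1, h2]
    exact keyUmul hcomm hJordan s hs x
  intro x y
  have e1 : (x + y) * (x + y) = x * x + (x * y + (x * y + y * y)) := by
    rw [mul_add, add_mul, add_mul, hcomm y x]; abel
  have e2 := hsq (x + y)
  rw [e1, hadd, hadd, hadd, hsq, hsq, hadd, mul_add, add_mul, add_mul,
    hcomm (Δ y) (Δ x)] at e2
  have e3 : Δ (x * y) + Δ (x * y) = Δ x * Δ y + Δ x * Δ y := by
    have e4 := e2
    have e5 : Δ x * Δ x + (Δ (x * y) + (Δ (x * y) + Δ y * Δ y))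
        = Δ x * Δ x + (Δ x * Δ y + (Δ x * Δ y + Δ y * Δ y)) := by
      rw [e4]; abel
    have e6 := add_left_cancel e5
    have e7 : Δ (x * y) + Δ (x * y) + Δ y * Δ y
        = Δ x * Δ y + Δ x * Δ y + Δ y * Δ y := by
      rw [show Δ (x*y) + Δ (x*y) + Δ y * Δ y = Δ (x*y) + (Δ (x*y) + Δ y * Δ y) from by abel,
        e6]; abel
    exact add_right_cancel e7
  have e8 : (2:ℤ) • Δ (x * y) = (2:ℤ) • (Δ x * Δ y) := by
    rw [two_smul, two_smul]; exact e3
  exact zsmul_cancel (by norm_num) e8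
end

section
/- Let V be an n-dimensional vector space over a field F with fixed basis 𝒱, and let φ : V → V be a map such that for every v, w ∈ V there is a linear endomorphism whose matrix with respect to 𝒱 is skew-symmetric, agreeing with φ at v and w. Then φ is linear (and its matrix with respect to 𝒱 is skew-symmetric). -/
open Matrix

/-- A 2-local linear map whose local implementations all have skew-symmetric
matrices with respect to a fixed basis is linear, and its matrix is skew-symmetric. -/
theorem two_local_skew_symmetric_is_linear
    {F V : Type*} [Field F] [AddCommGroup V] [Module F V] {n : ℕ}
    (b : Module.Basis (Fin n) F V) (φ : V → V)
    (h : ∀ v w : V, ∃ T : V →ₗ[F] V,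
      (LinearMap.toMatrix b b T)ᵀ = -(LinearMap.toMatrix b b T) ∧
      T v = φ v ∧ T w = φ w) :
    IsLinearMap F φ ∧ ∃ T : V →ₗ[F] V,
      (LinearMap.toMatrix b b T)ᵀ = -(LinearMap.toMatrix b b T) ∧ ∀ v : V, φ v = T v := by
  have key : ∀ v w : V,
      (b.repr w : Fin n → F) ⬝ᵥ (b.repr (φ v) : Fin n → F)
        = -((b.repr v : Fin n → F) ⬝ᵥ (b.repr (φ w) : Fin n → F)) := by
    intro v w
    obtain ⟨T, hskew, hv, hw⟩ := h v w
    rw [← hv, ← hw]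
    rw [← LinearMap.toMatrix_mulVec_repr b b T v, ← LinearMap.toMatrix_mulVec_repr b b T w]
    set A := LinearMap.toMatrix b b T
    rw [Matrix.dotProduct_mulVec, ← Matrix.mulVec_transpose, hskew, Matrix.neg_mulVec,
      neg_dotProduct, dotProduct_comm]
  -- coordinates of φ
  have coord : ∀ (i : Fin n) (v : V),
      b.repr (φ v) i = -((b.repr v : Fin n → F) ⬝ᵥ (b.repr (φ (b i)) : Fin n → F)) := by
    intro i v
    have := key v (b i)
    rwa [show (b.repr (b i) : Fin n → F) = Pi.single i 1 by
        ext j; simp [Module.Basis.repr_self, Finsupp.single_apply, Pi.single_apply, eq_comm],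
      single_dotProduct, one_mul] at this
  have hadd : ∀ v w : V, φ (v + w) = φ v + φ w := by
    intro v w
    apply b.repr.injective
    ext i
    simp only [map_add, Finsupp.add_apply, coord, map_add]
    rw [Finsupp.coe_add, add_dotProduct]; ring
  have hsmul : ∀ (c : F) (v : V), φ (c • v) = c • φ v := by
    intro c v
    apply b.repr.injective
    ext i
    simp only [_root_.map_smul, Finsupp.smul_apply, coord, smul_eq_mul]
    rw [Finsupp.coe_smul, smul_dotProduct, smul_eq_mul]; ring
  have hlin : IsLinearMap F φ := ⟨hadd, hsmul⟩
  refine ⟨hlin, IsLinearMap.mk' φ hlin, ?_, fun v => rfl⟩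
  ext i j
  rw [Matrix.transpose_apply, Matrix.neg_apply, LinearMap.toMatrix_apply,
    LinearMap.toMatrix_apply, IsLinearMap.mk'_apply, IsLinearMap.mk'_apply]
  have h1 := coord j (b i)
  have h2 := coord i (b j)
  have hs : ∀ k : Fin n, (b.repr (b k) : Fin n → F) = Pi.single k 1 := by
    intro k; ext l; simp [Module.Basis.repr_self, Finsupp.single_apply, Pi.single_apply, eq_comm]
  rw [hs i, single_dotProduct, one_mul] at h1
  rw [hs j, single_dotProduct, one_mul] at h2
  rw [h1, h2]
end

section
/- Let V be an n-dimensional vector space over a field F with fixed basis 𝒱, and let φ : V → V be a map such that for every v, w ∈ V there is a linear endomorphism whose matrix with respect to 𝒱 is symmetric, agreeing with φ at v and w. Then φ is linear. -/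
private lemma key_beta {F V : Type*} [Field F] [AddCommGroup V] [Module F V] {n : ℕ}
    (b : Module.Basis (Fin n) F V) (φ : V → V)
    (h : ∀ v w : V, ∃ T : V →ₗ[F] V,
      (LinearMap.toMatrix b b T).IsSymm ∧ T v = φ v ∧ T w = φ w)
    (v u : V) :
    dotProduct (b.repr (φ v)) (b.repr u)
      = dotProduct (b.repr v) (b.repr (φ u)) := by
  obtain ⟨T, hs, hv, hu⟩ := h v u
  rw [← hv, ← hu, ← LinearMap.toMatrix_mulVec_repr b b T v,
    ← LinearMap.toMatrix_mulVec_repr b b T u,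
    Matrix.dotProduct_mulVec, ← Matrix.mulVec_transpose, hs.eq]

private lemma eq_of_beta {F V : Type*} [Field F] [AddCommGroup V] [Module F V] {n : ℕ}
    (b : Module.Basis (Fin n) F V) (x y : V)
    (hxy : ∀ u, dotProduct (b.repr x) (b.repr u)
      = dotProduct (b.repr y) (b.repr u)) : x = y := by
  apply b.repr.injective
  ext i
  have := hxy (b i)
  simpa [dotProduct, Module.Basis.repr_self, Finsupp.single_apply,
    Finset.sum_ite_eq'] using this

/-- A 2-local linear map whose local implementations all have symmetric
matrices with respect to a fixed basis is linear. -/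
theorem two_local_symmetric_is_linear
    {F V : Type*} [Field F] [AddCommGroup V] [Module F V] {n : ℕ}
    (b : Module.Basis (Fin n) F V) (φ : V → V)
    (h : ∀ v w : V, ∃ T : V →ₗ[F] V,
      (LinearMap.toMatrix b b T).IsSymm ∧ T v = φ v ∧ T w = φ w) :
    IsLinearMap F φ := by
  constructor
  · intro v w
    apply eq_of_beta b
    intro u
    have h1 := key_beta b φ h (v + w) u
    have h2 := key_beta b φ h v u
    have h3 := key_beta b φ h w u
    rw [h1, map_add]
    simp only [dotProduct, map_add, Finsupp.coe_add, Pi.add_apply, add_mul,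
      Finset.sum_add_distrib] at *
    rw [← h2, ← h3]
  · intro c v
    apply eq_of_beta b
    intro u
    have h1 := key_beta b φ h (c • v) u
    have h2 := key_beta b φ h v u
    rw [h1]
    simp only [dotProduct, map_smul, Finsupp.coe_smul, Pi.smul_apply,
      smul_eq_mul, mul_assoc, ← Finset.mul_sum] at *
    rw [← h2]
end
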